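/- Fix t ∈ [0,1). Let h be analytic on the unit disk D with h'(z) = (1−z)^{−3/2} (principal branch), let ω(z) = t + (1−t)z (an analytic self-map of D), and let g be analytic on D with g' = ω·h'. Then the harmonic mapping f = h + conj(g) satisfies (1−|z|²)·√(J_f(z)) ≤ 2√2·√(1+t) for all z ∈ D; in particular f ∈ B_H. -/

import Mathlib

open Metric Set Filter

/-- Jacobian of the harmonic mapping `f = h + conj g`. -/
noncomputable def jacobian (h g : ℂ → ℂ) (z : ℂ) : ℝ :=
  ‖deriv h z‖ ^ 2 - ‖deriv g z‖ ^ 2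

/-- The Bloch-type seminorm `β(f) = sup_{z ∈ 𝔻} (1 - |z|²) √|J_f(z)|`. -/
noncomputable def betaH (h g : ℂ → ℂ) : ℝ :=
  sSup ((fun z => (1 - ‖(z : ℂ)‖ ^ 2) * Real.sqrt |jacobian h g z|) '' Metric.ball 0 1)

/-- Membership in the Bloch-type class `B_H`, i.e. `β(f) < ∞`. -/
def InBH (h g : ℂ → ℂ) : Prop :=
  BddAbove ((fun z => (1 - ‖(z : ℂ)‖ ^ 2) * Real.sqrt |jacobian h g z|) '' Metric.ball 0 1)

/-- **The extremal example.**  For `t ∈ [0,1)`, `h'(z) = (1-z)^{-3/2}`,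
`ω(z) = t + (1-t)z` and `g' = ω·h'`, the harmonic mapping `f = h + conj g` satisfies
`(1-|z|²)√(J_f(z)) ≤ 2√2·√(1+t)` on the disk; in particular `f ∈ B_H`. -/
theorem extremal_example_in_BH (t : ℝ) (ht : t ∈ Set.Ico (0 : ℝ) 1) (h g ω : ℂ → ℂ)
    (hω : ω = fun z => (t : ℂ) + (1 - (t : ℂ)) * z)
    (hh : DifferentiableOn ℂ h (Metric.ball 0 1))
    (hd : ∀ z ∈ Metric.ball (0 : ℂ) 1, deriv h z = (1 - z) ^ (-(3 / 2) : ℂ))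
    (hg : DifferentiableOn ℂ g (Metric.ball 0 1))
    (hgd : ∀ z ∈ Metric.ball (0 : ℂ) 1, deriv g z = ω z * deriv h z) :
    (∀ z ∈ Metric.ball (0 : ℂ) 1,
        (1 - ‖z‖ ^ 2) * Real.sqrt (jacobian h g z)
          ≤ 2 * Real.sqrt 2 * Real.sqrt (1 + t))
    ∧ InBH h g := by
  obtain ⟨ht0, ht1⟩ := ht
  have key : ∀ z ∈ Metric.ball (0 : ℂ) 1,
      0 ≤ jacobian h g z ∧
      (1 - ‖z‖ ^ 2) * Real.sqrt (jacobian h g z)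
        ≤ 2 * Real.sqrt 2 * Real.sqrt (1 + t) := by
    intro z hz
    have hz1 : ‖z‖ < 1 := by
      simpa [Complex.dist_eq] using hz
    have hz0 : 0 ≤ ‖z‖ := norm_nonneg z
    set a := ‖z‖ with ha
    set s := ‖1 - z‖ with hs
    have hzne : (1 : ℂ) - z ≠ 0 := by
      intro hc
      have h1 : z = 1 := by linear_combination -hc
      have hz1' : ‖z‖ < 1 := hz1
      rw [h1] at hz1'; simp at hz1'
    have hspos : 0 < s := norm_pos_iff.mpr hzne
    have hsge : 1 - a ≤ s := by
      have := norm_sub_norm_le (1 : ℂ) z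
      simpa using this
    -- |h'| = s^(-3/2)
    have habs : ‖deriv h z‖ = s ^ (-(3 / 2) : ℝ) := by
      rw [hd z hz, Complex.norm_cpow_of_ne_zero hzne]
      norm_num
      rw [← hs]
    -- |ω z| and bounds
    set w := ‖ω z‖ with hw
    have hwle : w ≤ t + (1 - t) * a := by
      rw [hw, hω]
      calc ‖(t : ℂ) + (1 - (t : ℂ)) * z‖
          ≤ ‖(t : ℂ)‖ + ‖(1 - (t : ℂ)) * z‖ :=
            norm_add_le _ _
        _ = t + (1 - t) * a := by
            rw [norm_mul]
            have h1 : ((1 : ℂ) - (t : ℂ)) = ((1 - t : ℝ) : ℂ) := by push_cast; ring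
            rw [h1, Complex.norm_real, Complex.norm_real, Real.norm_eq_abs, Real.norm_eq_abs,
              abs_of_nonneg ht0, abs_of_nonneg (by linarith)]
    have hw1 : w < 1 := by nlinarith
    have hw0 : 0 ≤ w := norm_nonneg _
    have hwsub : 1 - w ≤ (1 - t) * s := by
      have h1 : ‖(1 : ℂ)‖ - ‖ω z‖ ≤ ‖1 - ω z‖ := by
        have := norm_sub_norm_le (1 : ℂ) (ω z)
        simpa using this
      have h2 : (1 : ℂ) - ω z = ((1 - t : ℝ) : ℂ) * (1 - z) := by
        rw [hω]; push_cast; ring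
      rw [h2, norm_mul, Complex.norm_real, Real.norm_eq_abs, abs_of_nonneg (by linarith)] at h1
      simpa using h1
    -- jacobian formula
    have hJ : jacobian h g z = s ^ (-(3 : ℝ)) * (1 - w ^ 2) := by
      unfold jacobian
      rw [hgd z hz, norm_mul, habs, ← hw, mul_pow]
      have : (s ^ (-(3 / 2) : ℝ)) ^ 2 = s ^ (-(3 : ℝ)) := by
        rw [← Real.rpow_natCast (s ^ (-(3 / 2) : ℝ)) 2, ← Real.rpow_mul hspos.le]
        norm_num
      rw [this]; ring
    have hwsq : 0 ≤ 1 - w ^ 2 := by nlinarith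
    have hrpos : 0 < s ^ (-(3 : ℝ)) := Real.rpow_pos_of_pos hspos _
    have hJ0 : 0 ≤ jacobian h g z := by rw [hJ]; positivity
    refine ⟨hJ0, ?_⟩
    have ha2 : 0 ≤ 1 - a ^ 2 := by nlinarith
    -- core inequality
    have hcore : (1 - a ^ 2) ^ 2 * jacobian h g z ≤ 8 * (1 + t) := by
      rw [hJ]
      have hs3 : s ^ (-(3 : ℝ)) = (s ^ 3)⁻¹ := by
        rw [← Real.rpow_natCast s 3, ← Real.rpow_neg hspos.le]
        norm_num
      rw [hs3]
      have h1 : 1 - a ^ 2 ≤ 2 * s := by nlinarith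
      have h2 : 1 - w ^ 2 ≤ 2 * (1 + t) * s := by nlinarith
      have hmain : (1 - a ^ 2) ^ 2 * (1 - w ^ 2) ≤ 8 * (1 + t) * s ^ 3 := by
        calc (1 - a ^ 2) ^ 2 * (1 - w ^ 2)
            ≤ (2 * s) ^ 2 * (2 * (1 + t) * s) := by
              apply mul_le_mul (pow_le_pow_left₀ ha2 h1 2) h2 hwsq (by positivity)
          _ = 8 * (1 + t) * s ^ 3 := by ring
      calc (1 - a ^ 2) ^ 2 * ((s ^ 3)⁻¹ * (1 - w ^ 2))
          = ((1 - a ^ 2) ^ 2 * (1 - w ^ 2)) * (s ^ 3)⁻¹ := by ring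
        _ ≤ (8 * (1 + t) * s ^ 3) * (s ^ 3)⁻¹ :=
            mul_le_mul_of_nonneg_right hmain (by positivity)
        _ = 8 * (1 + t) := by field_simp
    calc (1 - a ^ 2) * Real.sqrt (jacobian h g z)
        = Real.sqrt ((1 - a ^ 2) ^ 2 * jacobian h g z) := by
          rw [Real.sqrt_mul (by positivity), Real.sqrt_sq ha2]
      _ ≤ Real.sqrt (8 * (1 + t)) := Real.sqrt_le_sqrt hcore
      _ = 2 * Real.sqrt 2 * Real.sqrt (1 + t) := by
          rw [Real.sqrt_mul (by norm_num)]
          rw [show (8 : ℝ) = 2 ^ 2 * 2 by norm_num,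
            Real.sqrt_mul (by positivity), Real.sqrt_sq (by norm_num)]
  refine ⟨fun z hz => (key z hz).2, ⟨2 * Real.sqrt 2 * Real.sqrt (1 + t), ?_⟩⟩
  rintro x ⟨z, hz, rfl⟩
  have := key z hz
  simpa [abs_of_nonneg this.1] using this.2
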